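/- Let p be a prime and F a finite field of characteristic p, viewed as an algebra over the prime field 𝔽_p = ZMod p. Let α ∈ F be nonzero and suppose F = 𝔽_p(α), i.e. Algebra.adjoin 𝔽_p {α} = F, and let y ∈ F be nonzero. Let G be the subgroup of GL₂(F) generated by the two matrices [[α, 0], [0, 1]] and [[1, y], [0, 1]]. Then the cardinality of G is m · |F|, where m is the multiplicative order of α in Fˣ. -/

import Mathlib

open Matrix

section AffAux
variable {F : Type*} [Field F]

/-- The affine matrix `[[u, b], [0, 1]]` as an element of `GL₂(F)`. -/
def affU (u : Fˣ) (b : F) : GL (Fin 2) F :=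
  ⟨!![(u : F), b; 0, 1], !![((u⁻¹ : Fˣ) : F), -((u⁻¹ : Fˣ) : F) * b; 0, 1],
   by rw [Matrix.mul_fin_two, Matrix.one_fin_two]; ext i j; fin_cases i <;> fin_cases j <;>
        simp,
   by rw [Matrix.mul_fin_two, Matrix.one_fin_two]; ext i j; fin_cases i <;> fin_cases j <;>
        simp⟩

@[simp] lemma affU_val (u : Fˣ) (b : F) :
    (affU u b : Matrix (Fin 2) (Fin 2) F) = !![(u : F), b; 0, 1] := rfl

lemma affU_mul (u v : Fˣ) (b c : F) :
    affU u b * affU v c = affU (u * v) ((u : F) * c + b) := by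
  ext
  simp [affU, Matrix.mul_fin_two]

lemma affU_one : affU (1 : Fˣ) (0 : F) = 1 := by
  ext
  simp [affU, Matrix.one_fin_two]

lemma affU_inv (u : Fˣ) (b : F) :
    (affU u b)⁻¹ = affU u⁻¹ (-((u⁻¹ : Fˣ) : F) * b) := by
  ext
  rfl

lemma affU_injective2 {u v : Fˣ} {b c : F} (h : affU u b = affU v c) :
    u = v ∧ b = c := by
  have h1 := congrArg (fun M : GL (Fin 2) F => (M : Matrix (Fin 2) (Fin 2) F) 0 0) h
  have h2 := congrArg (fun M : GL (Fin 2) F => (M : Matrix (Fin 2) (Fin 2) F) 0 1) h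
  simp only [affU_val] at h1 h2
  exact ⟨Units.ext (by simpa using h1), by simpa using h2⟩

/-- The subgroup of affine matrices whose diagonal entry is a power of `u₀`. -/
def affSub (u₀ : Fˣ) : Subgroup (GL (Fin 2) F) where
  carrier := {M | ∃ (n : ℤ) (b : F), M = affU (u₀ ^ n) b}
  one_mem' := ⟨0, 0, by rw [zpow_zero]; exact affU_one.symm⟩
  mul_mem' := by
    rintro _ _ ⟨n, b, rfl⟩ ⟨m, c, rfl⟩
    exact ⟨n + m, (↑(u₀ ^ n) * c + b), by rw [affU_mul, _root_.zpow_add]⟩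
  inv_mem' := by
    rintro _ ⟨n, b, rfl⟩
    exact ⟨-n, (-((u₀ ^ n)⁻¹ : Fˣ) * b : F), by rw [affU_inv, _root_.zpow_neg]⟩

end AffAux

/-- If `F` is a finite field of characteristic `p`, `α ∈ F` is nonzero with
`F = 𝔽_p(α)`, and `y ∈ F` is nonzero, then the subgroup of `GL₂(F)` generated by
`[[α,0],[0,1]]` and `[[1,y],[0,1]]` has order `m · |F|`, where `m` is the
multiplicative order of `α`. -/
theorem stmt_1 (p : ℕ) [Fact p.Prime] {F : Type*} [Field F] [Fintype F] [CharP F p]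
    [Algebra (ZMod p) F] (α y : F) (hα : α ≠ 0)
    (hadj : Algebra.adjoin (ZMod p) ({α} : Set F) = ⊤) (hy : y ≠ 0)
    (A B : GL (Fin 2) F)
    (hA : (A : Matrix (Fin 2) (Fin 2) F) = !![α, 0; 0, 1])
    (hB : (B : Matrix (Fin 2) (Fin 2) F) = !![1, y; 0, 1]) :
    Nat.card (Subgroup.closure ({A, B} : Set (GL (Fin 2) F))) =
      orderOf (Units.mk0 α hα) * Fintype.card F := by
  set u₀ : Fˣ := Units.mk0 α hα with hu₀
  have hu₀v : (u₀ : F) = α := rfl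
  have hAe : A = affU u₀ 0 := by ext : 1; rw [hA]; rfl
  have hBe : B = affU 1 y := by ext : 1; rw [hB]; rfl
  set C := Subgroup.closure ({A, B} : Set (GL (Fin 2) F)) with hC
  have hAC : A ∈ C := Subgroup.subset_closure (by simp)
  have hBC : B ∈ C := Subgroup.subset_closure (by simp)
  -- the set of `b` with unipotent `affU 1 b ∈ C`, as an additive subgroup
  set T : AddSubgroup F :=
    { carrier := {b | affU 1 b ∈ C}
      zero_mem' := by simpa [affU_one] using C.one_mem
      add_mem' := by
        intro b c hb hc
        have := C.mul_mem hb hc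
        rw [affU_mul] at this
        simpa [add_comm b c] using this
      neg_mem' := by
        intro b hb
        have := C.inv_mem hb
        rwa [affU_inv, inv_one, Units.val_one, neg_one_mul] at this } with hT
  -- T is closed under multiplication by α
  have hTα : ∀ b ∈ T, α * b ∈ T := by
    intro b hb
    have key : affU (1 : Fˣ) (α * b) = A * affU 1 b * A⁻¹ := by
      rw [eq_mul_inv_iff_mul_eq, hAe, affU_mul, affU_mul]
      norm_num [hu₀v]
    show affU (1 : Fˣ) (α * b) ∈ C
    rw [key]
    exact C.mul_mem (C.mul_mem hAC hb) (C.inv_mem hAC)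
  -- the ZMod p submodule of c with c * y ∈ T
  set S : Submodule (ZMod p) F :=
    { carrier := {c | c * y ∈ T}
      zero_mem' := by simpa using T.zero_mem
      add_mem' := by
        intro c d hc hd
        have := T.add_mem hc hd
        rwa [← add_mul] at this
      smul_mem' := by
        intro z c hc
        show z • c * y ∈ T
        rw [smul_mul_assoc]
        exact ZMod.smul_mem (K := T) hc z } with hS
  have hSpow : ∀ n : ℕ, (α ^ n : F) ∈ S := by
    intro n
    induction n with
    | zero =>
        show (α ^ 0 : F) * y ∈ T
        rw [pow_zero, one_mul]
        rw [hBe] at hBC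
        exact hBC
    | succ n ih =>
        show (α ^ (n + 1) : F) * y ∈ T
        have h2 : α * (α ^ n * y) ∈ T := hTα _ ih
        rwa [← mul_assoc, ← pow_succ'] at h2
  have hStop : ∀ c : F, c ∈ S := by
    have hspan : Submodule.span (ZMod p) ((Submonoid.closure {α} : Submonoid F) : Set F) = ⊤ := by
      rw [← Algebra.adjoin_eq_span, hadj]
      rfl
    intro c
    have hc : c ∈ Submodule.span (ZMod p) ((Submonoid.closure {α} : Submonoid F) : Set F) := by
      rw [hspan]; trivial
    refine Submodule.span_le.2 ?_ hc
    rintro x hx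
    obtain ⟨n, rfl⟩ := Submonoid.mem_closure_singleton.1 hx
    exact hSpow n
  -- every unipotent is in C
  have hTtop : ∀ b : F, affU (1 : Fˣ) b ∈ C := by
    intro b
    have h2 : b * y⁻¹ * y ∈ T := hStop (b * y⁻¹)
    have hb : b * y⁻¹ * y = b := by field_simp
    rw [hb] at h2
    exact h2
  -- diagonal powers
  have hdia : ∀ n : ℤ, A ^ n = affU (u₀ ^ n) (0 : F) := by
    have hnat : ∀ m : ℕ, A ^ m = affU (u₀ ^ m) (0 : F) := by
      intro m
      induction m with
      | zero => rw [pow_zero, pow_zero, affU_one]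
      | succ m ih => rw [pow_succ, ih, hAe, affU_mul, ← pow_succ]; norm_num
    intro n
    rcases n with m | m
    · rw [Int.ofNat_eq_coe, zpow_natCast, zpow_natCast, hnat]
    · rw [zpow_negSucc, zpow_negSucc, hnat, affU_inv]
      norm_num
  -- closure = affSub u₀
  have hCH : C = affSub u₀ := by
    apply le_antisymm
    · rw [hC]
      apply Subgroup.closure_le (affSub u₀) |>.2
      rintro x (rfl | rfl)
      · exact ⟨1, 0, by rw [zpow_one, hAe]⟩
      · exact ⟨0, y, by rw [zpow_zero, hBe]⟩
    · rintro _ ⟨n, b, rfl⟩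
      have h1 : A ^ n ∈ C := C.zpow_mem hAC n
      have h2 : affU (1 : Fˣ) (((u₀ ^ n)⁻¹ : Fˣ) * b) ∈ C := hTtop _
      have := C.mul_mem h1 h2
      rw [hdia] at this
      rwa [affU_mul, mul_one, add_zero, ← mul_assoc, Units.mul_inv, one_mul] at this
  -- counting
  have e : (Subgroup.zpowers u₀ × F) ≃ C := by
    refine Equiv.ofBijective
      (fun x => ⟨affU ((x.1 : Fˣ)) x.2, ?_⟩) ⟨?_, ?_⟩
    · rw [hCH]
      obtain ⟨n, hn⟩ := Subgroup.mem_zpowers_iff.1 x.1.2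
      exact ⟨n, x.2, by rw [hn]⟩
    · rintro ⟨⟨v, hv⟩, b⟩ ⟨⟨w, hw⟩, c⟩ h
      have h' : affU v b = affU w c := congrArg Subtype.val h
      obtain ⟨h1, h2⟩ := affU_injective2 h'
      simp [h1, h2]
    · rintro ⟨M, hM⟩
      rw [hCH] at hM
      obtain ⟨n, b, rfl⟩ := hM
      exact ⟨(⟨u₀ ^ n, Subgroup.zpow_mem _ (Subgroup.mem_zpowers u₀) n⟩, b), rfl⟩
  calc Nat.card C = Nat.card (Subgroup.zpowers u₀ × F) := (Nat.card_congr e).symm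
    _ = Nat.card (Subgroup.zpowers u₀) * Nat.card F := Nat.card_prod _ _
    _ = orderOf u₀ * Fintype.card F := by rw [Nat.card_zpowers, Nat.card_eq_fintype_card]
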